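/- Let S : U → V be an orientation-preserving conformal local symmetry of a compact set A ⊆ C (i.e., S(U ∩ A) = V ∩ A), and suppose x ∈ U ∩ A is such that A is asymptotically self-similar at x with scale ρ and limit model L. Then A is asymptotically self-similar at S(x) with scale ρ and limit model S'(x)·L. -/

import Mathlib

open Pointwise

/-- Truncation: X_r = (X ∩ D_r) ∪ ∂D_r. -/
noncomputable def trunc (r : ℝ) (X : Set ℂ) : Set ℂ :=
  (X ∩ Metric.closedBall 0 r) ∪ Metric.sphere (0 : ℂ) r

/-- B is asymptotically ρ-self-similar about 0 with limit model L. -/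
def AsympSelfSimilar (ρ : ℂ) (L B : Set ℂ) : Prop :=
  ∃ r > 0, Filter.Tendsto
    (fun n : ℕ => Metric.hausdorffDist (trunc r ((ρ ^ n) • B)) (trunc r L))
    Filter.atTop (nhds 0)

lemma mul_div_aux {t b a : ℝ} (ht : 0 ≤ t) (hb : 0 < b) (ha : 0 ≤ a) (hab : a ≤ b) :
    t / b * a ≤ t := by
  calc t / b * a ≤ t / b * b := by
        exact mul_le_mul_of_nonneg_left hab (by positivity)
    _ = t := div_mul_cancel₀ _ hb.ne'

lemma sphere_subset_trunc {r : ℝ} {X : Set ℂ} : Metric.sphere (0 : ℂ) r ⊆ trunc r X :=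
  Set.subset_union_right

lemma trunc_subset_closedBall {r : ℝ} {X : Set ℂ} :
    trunc r X ⊆ Metric.closedBall (0 : ℂ) r :=
  Set.union_subset Set.inter_subset_right Metric.sphere_subset_closedBall

lemma trunc_nonempty {r : ℝ} (hr : 0 ≤ r) (X : Set ℂ) : (trunc r X).Nonempty :=
  ⟨(r : ℂ), Or.inr (by
    simp [Metric.mem_sphere, Complex.dist_eq, abs_of_nonneg hr])⟩

lemma trunc_hausdorffEdist_ne_top {r : ℝ} (hr : 0 ≤ r) (X Y : Set ℂ) :
    EMetric.hausdorffEdist (trunc r X) (trunc r Y) ≠ ⊤ :=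
  Metric.hausdorffEdist_ne_top_of_nonempty_of_bounded (trunc_nonempty hr X)
    (trunc_nonempty hr Y)
    (Metric.isBounded_closedBall.subset trunc_subset_closedBall)
    (Metric.isBounded_closedBall.subset trunc_subset_closedBall)

/-- If `z` is close to the sphere of radius `r` (from inside), then some point of
`trunc r X` (namely the radial projection of `z` to the sphere) is within `ε` of `z`. -/
lemma exists_trunc_near (X : Set ℂ) {r ε : ℝ} (hr : 0 < r) (hεr : ε < r) {z : ℂ}
    (h1 : r - ε ≤ ‖z‖) (h2 : ‖z‖ ≤ r) : ∃ y ∈ trunc r X, dist z y ≤ ε := by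
  have hz : 0 < ‖z‖ := by linarith
  refine ⟨(r / ‖z‖) • z, sphere_subset_trunc ?_, ?_⟩
  · have : ‖(r / ‖z‖) • z‖ = r := by
      rw [norm_smul, Real.norm_eq_abs, abs_of_nonneg (by positivity),
        div_mul_cancel₀ _ hz.ne']
    simpa [Metric.mem_sphere, dist_zero_right] using this
  · have heq : z - (r / ‖z‖) • z = (1 - r / ‖z‖) • z := by
      rw [sub_smul, one_smul]
    have hge : (1 : ℝ) ≤ r / ‖z‖ := (one_le_div hz).mpr h2
    rw [dist_eq_norm, heq, norm_smul, Real.norm_eq_abs, abs_of_nonpos (by linarith),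
      neg_sub, sub_mul, div_mul_cancel₀ _ hz.ne', one_mul]
    linarith

set_option maxHeartbeats 2000000 in
/-- A conformal local symmetry transports asymptotic self-similarity: if A is
asymptotically ρ-self-similar at x with limit model L, then it is
asymptotically ρ-self-similar at S(x) with limit model S'(x)·L. -/
theorem asymp_self_similar_conformal_image (A : Set ℂ) (hA : IsCompact A)
    (U V : Set ℂ) (hU : IsOpen U) (hV : IsOpen V)
    (S : ℂ → ℂ) (hS : DifferentiableOn ℂ S U)
    (hS' : ∀ z ∈ U, deriv S z ≠ 0) (hinj : Set.InjOn S U)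
    (hsym : S '' (U ∩ A) = V ∩ A)
    (x : ℂ) (hx : x ∈ U ∩ A)
    (ρ : ℂ) (hρ : 1 < ‖ρ‖)
    (L : Set ℂ) (h0 : (0 : ℂ) ∈ L)
    (hL : AsympSelfSimilar ρ L ((fun z => z - x) '' A)) :
    AsympSelfSimilar ρ ((deriv S x) • L) ((fun z => z - S x) '' A) := by
  obtain ⟨hxU, hxA⟩ := hx
  obtain ⟨r₀, hr₀, htend⟩ := hL
  set c : ℂ := deriv S x with hc_def
  have hc : c ≠ 0 := hS' x hxU
  have hcn : 0 < ‖c‖ := norm_pos_iff.mpr hc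
  have hρn : 1 < ‖ρ‖ := by exact hρ
  -- strict differentiability and local inverse
  have hSx : AnalyticAt ℂ S x := hS.analyticAt (hU.mem_nhds hxU)
  have hst : HasStrictDerivAt S c x := by
    have h := hSx.hasStrictFDerivAt.hasStrictDerivAt
    simpa [hc_def, fderiv_apply_one_eq_deriv] using h
  set g : ℂ → ℂ := hst.localInverse S c x hc with hg_def
  have hfd := hst.hasStrictFDerivAt_equiv hc
  have hginv : ∀ᶠ z in nhds (S x), S (g z) = z := hfd.eventually_right_inverse
  have hgx : g (S x) = x := hfd.localInverse_apply_image
  have hgcont : ContinuousAt g (S x) := hfd.localInverse_continuousAt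
  have hgderiv : HasStrictDerivAt g c⁻¹ (S x) := hst.to_localInverse hc
  clear_value g
  have hSxVA : S x ∈ V ∩ A := hsym ▸ ⟨x, ⟨hxU, hxA⟩, rfl⟩
  set K : ℝ := ‖c⁻¹‖ + 1 with hK_def
  have hK : 0 < K := by positivity
  -- Fact 4 : linear bound on local inverse
  have h4 : ∀ᶠ z in nhds (S x), ‖g z - x‖ ≤ K * ‖z - S x‖ := by
    have h := (hasDerivAt_iff_isLittleO.mp hgderiv.hasDerivAt).def one_pos
    filter_upwards [h] with z hz
    rw [hgx] at hz
    have h1 : ‖g z - x‖ ≤ ‖g z - x - (z - S x) • c⁻¹‖ + ‖(z - S x) • c⁻¹‖ := by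
      calc ‖g z - x‖ = ‖(g z - x - (z - S x) • c⁻¹) + (z - S x) • c⁻¹‖ := by ring_nf
        _ ≤ _ := norm_add_le _ _
    have h2 : ‖(z - S x) • c⁻¹‖ = ‖c⁻¹‖ * ‖z - S x‖ := by
      rw [norm_smul]; ring
    rw [one_mul] at hz
    rw [hK_def]; nlinarith [norm_nonneg (z - S x)]
  -- Fact 2 : backward local symmetry
  have h2' : ∀ᶠ z in nhds (S x), (z ∈ A → g z ∈ A ∧ S (g z) = z) := by
    filter_upwards [hV.mem_nhds hSxVA.1, hginv,
      hgcont.eventually_mem (show U ∈ nhds (g (S x)) by rw [hgx]; exact hU.mem_nhds hxU)]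
      with z hzV hzS hzU hzA
    have hz' : z ∈ S '' (U ∩ A) := by rw [hsym]; exact ⟨hzV, hzA⟩
    obtain ⟨a, ⟨haU, haA⟩, hSa⟩ := hz'
    have : g z = a := hinj hzU haU (by rw [hzS, hSa])
    exact ⟨this ▸ haA, hzS⟩
  obtain ⟨δ₂, hδ₂, H2⟩ := Metric.eventually_nhds_iff.mp (h2'.and h4)
  -- Fact 1 : forward local symmetry
  have h1 : ∀ᶠ w in nhds x, (w ∈ A → S w ∈ A) := by
    filter_upwards [hU.mem_nhds hxU] with w hwU hwA
    have : S w ∈ V ∩ A := hsym ▸ ⟨w, ⟨hwU, hwA⟩, rfl⟩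
    exact this.2
  obtain ⟨δ₁, hδ₁, H1⟩ := Metric.eventually_nhds_iff.mp h1
  set r : ℝ := ‖c‖ * r₀ with hr_def
  have hr : 0 < r := mul_pos hcn hr₀
  refine ⟨r, hr, ?_⟩
  set B : Set ℂ := (fun z => z - x) '' A with hB_def
  set B' : Set ℂ := (fun z => z - S x) '' A with hB'_def
  have key : ∀ ε : ℝ, 0 < ε → ε < r → ∀ᶠ n : ℕ in Filter.atTop,
      Metric.hausdorffDist (trunc r ((ρ ^ n) • B')) (trunc r (c • L)) ≤ ε := by
    intro ε hε hεr
    obtain ⟨ε₁, hε₁, hb1⟩ : ∃ ε₁ : ℝ, 0 < ε₁ ∧ ‖c‖ * ε₁ ≤ ε / 4 := by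
      refine ⟨ε / 4 / (‖c‖ + 1), by positivity, ?_⟩
      rw [mul_comm]
      exact mul_div_aux (by positivity) (by positivity) (norm_nonneg c) (by linarith)
    obtain ⟨ε₃, hε₃, hb2, hb3⟩ : ∃ ε₃ : ℝ, 0 < ε₃ ∧ ε₃ * (K * r) ≤ ε / 4 ∧ ε₃ * r₀ ≤ ε / 4 := by
      have hKr : 0 < K * r := mul_pos hK hr
      refine ⟨ε / 4 / (K * r + r₀ + 1), by positivity, ?_, ?_⟩
      · exact mul_div_aux (by positivity) (by positivity) hKr.le (by linarith)
      · exact mul_div_aux (by positivity) (by positivity) hr₀.le (by linarith)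
    -- Fact 3 : derivative estimate with accuracy ε₃
    have h3 : ∀ᶠ w in nhds x, ‖S w - S x - (w - x) • c‖ ≤ ε₃ * ‖w - x‖ :=
      (hasDerivAt_iff_isLittleO.mp hst.hasDerivAt).def hε₃
    obtain ⟨δ₃, hδ₃, H3⟩ := Metric.eventually_nhds_iff.mp h3
    set δ : ℝ := min δ₁ (min δ₂ δ₃) with hδ_def
    have hδ : 0 < δ := lt_min hδ₁ (lt_min hδ₂ hδ₃)
    set D : ℝ := max r (max (K * r) r₀) with hD_def
    have hD : 0 < D := lt_of_lt_of_le hr (le_max_left _ _)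
    have hev : ∀ᶠ n : ℕ in Filter.atTop, D / δ + 1 ≤ ‖ρ‖ ^ n :=
      (tendsto_pow_atTop_atTop_of_one_lt hρn).eventually_ge_atTop _
    filter_upwards [htend.eventually_lt_const hε₁, hev] with n hdist hn
    have hρp : (0 : ℝ) < ‖ρ‖ ^ n := by positivity
    have hsmall : D / ‖ρ‖ ^ n < δ := by
      rw [div_lt_iff₀ hρp]
      have h1' : δ * (D / δ) = D := mul_div_cancel₀ _ hδ.ne'
      nlinarith [mul_le_mul_of_nonneg_left hn hδ.le]
    have hsr : r / ‖ρ‖ ^ n < δ :=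
      lt_of_le_of_lt (by gcongr; exact le_max_left _ _) hsmall
    have hsKr : K * r / ‖ρ‖ ^ n < δ :=
      lt_of_le_of_lt (by gcongr; exact le_trans (le_max_left _ _) (le_max_right _ _)) hsmall
    have hsr₀ : r₀ / ‖ρ‖ ^ n < δ :=
      lt_of_le_of_lt (by gcongr; exact le_trans (le_max_right _ _) (le_max_right _ _)) hsmall
    have hδδ₁ : δ ≤ δ₁ := min_le_left _ _
    have hδδ₂ : δ ≤ δ₂ := le_trans (min_le_right _ _) (min_le_left _ _)
    have hδδ₃ : δ ≤ δ₃ := le_trans (min_le_right _ _) (min_le_right _ _)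
    apply Metric.hausdorffDist_le_of_mem_dist hε.le
    · -- forward direction
      rintro z' (⟨hz'mem, hz'ball⟩ | hz'sph)
      swap
      · exact ⟨z', sphere_subset_trunc hz'sph, by simpa using hε.le⟩
      obtain ⟨w', hw'B', hw'eq⟩ := hz'mem
      simp only [smul_eq_mul] at hw'eq
      obtain ⟨a, haA, haeq⟩ := hw'B'
      simp only at haeq
      have hz'le : ‖z'‖ ≤ r := mem_closedBall_zero_iff.mp hz'ball
      have hz'norm : ‖z'‖ = ‖ρ‖ ^ n * ‖a - S x‖ := by
        rw [← hw'eq, ← haeq, norm_mul, norm_pow]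
      have haSx : ‖a - S x‖ ≤ r / ‖ρ‖ ^ n := by
        rw [le_div_iff₀ hρp]
        linarith [hz'le, hz'norm]
      have hadist : dist a (S x) < δ₂ := by
        rw [dist_eq_norm]
        exact lt_of_le_of_lt haSx (lt_of_lt_of_le hsr hδδ₂)
      obtain ⟨hba, hbnorm⟩ := H2 hadist
      obtain ⟨hbA, hbS⟩ := hba haA
      set b : ℂ := g a with hb_def
      have hbx : ‖b - x‖ ≤ K * r / ‖ρ‖ ^ n := by
        rw [mul_div_assoc]
        exact le_trans hbnorm (mul_le_mul_of_nonneg_left haSx hK.le)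
      have hbδ₃ : dist b x < δ₃ := by
        rw [dist_eq_norm]
        exact lt_of_le_of_lt hbx (lt_of_lt_of_le hsKr hδδ₃)
      have hT := H3 hbδ₃
      rw [hbS] at hT
      set p : ℂ := ρ ^ n • (b - x) with hp_def
      have hpB : p ∈ (ρ ^ n) • B := ⟨b - x, ⟨b, hbA, rfl⟩, rfl⟩
      have hpn : ‖p‖ ≤ K * r := by
        rw [hp_def, norm_smul, norm_pow]
        calc ‖ρ‖ ^ n * ‖b - x‖ ≤ ‖ρ‖ ^ n * (K * r / ‖ρ‖ ^ n) := by
              exact mul_le_mul_of_nonneg_left hbx hρp.le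
          _ = K * r := by field_simp
      have hdz'cp : dist z' (c * p) ≤ ε / 4 := by
        rw [dist_eq_norm, ← hw'eq, ← haeq]
        have heq : (ρ ^ n * (a - S x) : ℂ) - c * p
            = ρ ^ n * ((a - S x) - (b - x) • c) := by
          rw [hp_def]; simp only [smul_eq_mul]; ring
        rw [heq, norm_mul, norm_pow]
        calc ‖ρ‖ ^ n * ‖a - S x - (b - x) • c‖ ≤ ‖ρ‖ ^ n * (ε₃ * ‖b - x‖) := by
              exact mul_le_mul_of_nonneg_left hT hρp.le
          _ = ε₃ * (‖ρ‖ ^ n * ‖b - x‖) := by ring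
          _ ≤ ε₃ * (K * r) := by
              apply mul_le_mul_of_nonneg_left _ hε₃.le
              calc ‖ρ‖ ^ n * ‖b - x‖ ≤ ‖ρ‖ ^ n * (K * r / ‖ρ‖ ^ n) :=
                    mul_le_mul_of_nonneg_left hbx hρp.le
                _ = K * r := by field_simp
          _ ≤ ε / 4 := hb2
      by_cases hple : ‖p‖ ≤ r₀
      · have hpT : p ∈ trunc r₀ ((ρ ^ n) • B) :=
          Or.inl ⟨hpB, mem_closedBall_zero_iff.mpr hple⟩
        obtain ⟨q, hqT, hpq⟩ := Metric.exists_dist_lt_of_hausdorffDist_lt hpT hdist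
          (trunc_hausdorffEdist_ne_top hr₀.le _ _)
        rcases hqT with ⟨hqL, hqball⟩ | hqsph
        · refine ⟨c * q, Or.inl ⟨⟨q, hqL, rfl⟩, ?_⟩, ?_⟩
          · rw [mem_closedBall_zero_iff, norm_mul]
            calc ‖c‖ * ‖q‖ ≤ ‖c‖ * r₀ :=
                  mul_le_mul_of_nonneg_left (mem_closedBall_zero_iff.mp hqball) hcn.le
              _ = r := hr_def.symm
          · have hcd : dist (c * p) (c * q) = ‖c‖ * dist p q := by
              rw [dist_eq_norm, dist_eq_norm, ← mul_sub, norm_mul]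
            calc dist z' (c * q) ≤ dist z' (c * p) + dist (c * p) (c * q) :=
                  dist_triangle _ _ _
              _ ≤ ε / 4 + ‖c‖ * ε₁ := by
                  rw [hcd]
                  exact add_le_add hdz'cp (mul_le_mul_of_nonneg_left hpq.le hcn.le)
              _ ≤ ε := by linarith
        · have hqn : ‖q‖ = r₀ := mem_sphere_zero_iff_norm.mp hqsph
          have hpl : r₀ - ε₁ ≤ ‖p‖ := by
            have h := abs_norm_sub_norm_le p q
            rw [← dist_eq_norm] at h
            have := abs_le.mp h
            linarith [this.2, hpq.le, hqn.le, hqn.ge]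
          have hcp : r - ‖c‖ * ε₁ ≤ ‖c * p‖ := by
            rw [norm_mul, hr_def]
            nlinarith [mul_le_mul_of_nonneg_left hpl hcn.le, hcn.le]
          have hz'lb : r - (ε / 4 + ‖c‖ * ε₁) ≤ ‖z'‖ := by
            have h := abs_norm_sub_norm_le z' (c * p)
            rw [← dist_eq_norm] at h
            have := abs_le.mp h
            linarith [this.1, hdz'cp]
          refine exists_trunc_near _ hr hεr ?_ hz'le
          linarith
      · push_neg at hple
        have hcp : r < ‖c * p‖ := by
          rw [norm_mul, hr_def]
          exact mul_lt_mul_of_pos_left hple hcn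
        have hz'lb : r - ε / 4 ≤ ‖z'‖ := by
          have h := abs_norm_sub_norm_le z' (c * p)
          rw [← dist_eq_norm] at h
          have := abs_le.mp h
          linarith [this.1, hdz'cp]
        refine exists_trunc_near _ hr hεr ?_ hz'le
        linarith
    · -- reverse direction
      rintro y (⟨hymem, hyball⟩ | hysph)
      swap
      · exact ⟨y, sphere_subset_trunc hysph, by simpa using hε.le⟩
      obtain ⟨q, hqL, hqeq⟩ := hymem
      simp only [smul_eq_mul] at hqeq
      have hyr : ‖y‖ ≤ r := mem_closedBall_zero_iff.mp hyball
      have hyq : ‖y‖ = ‖c‖ * ‖q‖ := by rw [← hqeq, norm_mul]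
      have hqr₀ : ‖q‖ ≤ r₀ := by
        have h' := hyr
        rw [hyq, hr_def] at h'
        exact le_of_mul_le_mul_left h' hcn
      have hqT : q ∈ trunc r₀ L := Or.inl ⟨hqL, mem_closedBall_zero_iff.mpr hqr₀⟩
      obtain ⟨p, hpT, hpq⟩ := Metric.exists_dist_lt_of_hausdorffDist_lt' hqT hdist
        (trunc_hausdorffEdist_ne_top hr₀.le _ _)
      rcases hpT with ⟨hpB, hpball⟩ | hpsph
      · obtain ⟨w, hwB, hweq⟩ := hpB
        simp only [smul_eq_mul] at hweq
        obtain ⟨a₀, ha₀A, ha₀eq⟩ := hwB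
        simp only at ha₀eq
        have hpr₀ : ‖p‖ ≤ r₀ := mem_closedBall_zero_iff.mp hpball
        have hwn : ‖w‖ ≤ r₀ / ‖ρ‖ ^ n := by
          rw [le_div_iff₀ hρp]
          have : ‖p‖ = ‖ρ‖ ^ n * ‖w‖ := by rw [← hweq, norm_mul, norm_pow]
          nlinarith [hpr₀]
        have ha₀d : dist a₀ x < δ := by
          rw [dist_eq_norm, ha₀eq]
          exact lt_of_le_of_lt hwn hsr₀
        have hSa₀ : S a₀ ∈ A := H1 (lt_of_lt_of_le ha₀d hδδ₁) ha₀A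
        have hT := H3 (lt_of_lt_of_le ha₀d hδδ₃)
        set z' : ℂ := ρ ^ n • (S a₀ - S x) with hz'_def
        have hz'B' : z' ∈ (ρ ^ n) • B' := ⟨S a₀ - S x, ⟨S a₀, hSa₀, rfl⟩, rfl⟩
        have hdz'cp : dist z' (c * p) ≤ ε / 4 := by
          rw [dist_eq_norm, hz'_def, ← hweq]
          have heq : (ρ ^ n • (S a₀ - S x) : ℂ) - c * (ρ ^ n * w)
              = ρ ^ n * ((S a₀ - S x) - (a₀ - x) • c) := by
            rw [← ha₀eq]; simp only [smul_eq_mul]; ring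
          rw [heq, norm_mul, norm_pow]
          calc ‖ρ‖ ^ n * ‖S a₀ - S x - (a₀ - x) • c‖ ≤ ‖ρ‖ ^ n * (ε₃ * ‖a₀ - x‖) :=
                mul_le_mul_of_nonneg_left hT hρp.le
            _ = ε₃ * (‖ρ‖ ^ n * ‖a₀ - x‖) := by ring
            _ ≤ ε₃ * r₀ := by
                apply mul_le_mul_of_nonneg_left _ hε₃.le
                have : ‖a₀ - x‖ ≤ r₀ / ‖ρ‖ ^ n := by rw [ha₀eq]; exact hwn
                calc ‖ρ‖ ^ n * ‖a₀ - x‖ ≤ ‖ρ‖ ^ n * (r₀ / ‖ρ‖ ^ n) :=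
                      mul_le_mul_of_nonneg_left this hρp.le
                  _ = r₀ := by field_simp
            _ ≤ ε / 4 := hb3
        have hdcpy : dist (c * p) y ≤ ‖c‖ * ε₁ := by
          rw [← hqeq, dist_eq_norm, ← mul_sub, norm_mul, ← dist_eq_norm]
          exact mul_le_mul_of_nonneg_left hpq.le hcn.le
        have hdz'y : dist z' y ≤ ε / 2 := by
          calc dist z' y ≤ dist z' (c * p) + dist (c * p) y := dist_triangle _ _ _
            _ ≤ ε / 4 + ‖c‖ * ε₁ := add_le_add hdz'cp hdcpy
            _ ≤ ε / 2 := by linarith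
        by_cases hz'le : ‖z'‖ ≤ r
        · refine ⟨z', Or.inl ⟨hz'B', mem_closedBall_zero_iff.mpr hz'le⟩, ?_⟩
          rw [dist_comm]
          exact le_trans hdz'y (by linarith)
        · push_neg at hz'le
          have hylb : r - ε / 2 ≤ ‖y‖ := by
            have h := abs_norm_sub_norm_le z' y
            rw [← dist_eq_norm] at h
            have := abs_le.mp h
            linarith [this.2, hdz'y]
          obtain ⟨y', hy'T, hdy⟩ := exists_trunc_near ((ρ ^ n) • B') hr hεr
            (by linarith) hyr
          exact ⟨y', hy'T, hdy⟩
      · have hpn : ‖p‖ = r₀ := mem_sphere_zero_iff_norm.mp hpsph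
        have hql : r₀ - ε₁ ≤ ‖q‖ := by
          have h := abs_norm_sub_norm_le p q
          rw [← dist_eq_norm] at h
          have := abs_le.mp h
          linarith [this.1, hpq.le]
        have hylb : r - ε / 4 ≤ ‖y‖ := by
          rw [hyq, hr_def]
          nlinarith [mul_le_mul_of_nonneg_left hql hcn.le, hb1, hcn.le]
        obtain ⟨y', hy'T, hdy⟩ := exists_trunc_near ((ρ ^ n) • B') hr hεr
          (by linarith) hyr
        exact ⟨y', hy'T, hdy⟩
  -- conclude the limit from the ε-bounds
  rw [Metric.tendsto_atTop]
  intro ε hε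
  have hmin : 0 < min (ε / 2) (r / 2) := lt_min (by linarith) (by linarith)
  have hminr : min (ε / 2) (r / 2) < r :=
    lt_of_le_of_lt (min_le_right _ _) (by linarith)
  obtain ⟨N, hN⟩ := Filter.eventually_atTop.mp (key _ hmin hminr)
  refine ⟨N, fun n hn => ?_⟩
  have h1 := hN n hn
  have h2 : (0 : ℝ) ≤ Metric.hausdorffDist (trunc r ((ρ ^ n) • B')) (trunc r (c • L)) :=
    Metric.hausdorffDist_nonneg
  rw [Real.dist_eq, sub_zero, abs_of_nonneg h2]
  calc Metric.hausdorffDist (trunc r ((ρ ^ n) • B')) (trunc r (c • L))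
      ≤ min (ε / 2) (r / 2) := h1
    _ ≤ ε / 2 := min_le_left _ _
    _ < ε := by linarith
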